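/- The past mask P_{[a,b]} m is optimal for the eventually context: if m' is a mask with m'(t₀) = false for some t₀ with (P_{[a,b]} m)(t₀) = true, then m' is not sufficient, i.e., there exists a signal s and a time t with m(t) = true such that F_{[a,b]}(s|_{m'})(t) ≠ F_{[a,b]}(s)(t). -/
import Mathlib


inductive TV : Type | T | F | U
deriving DecidableEq

open TV Set Pointwise

def maskApply (s : ℝ → TV) (m : ℝ → Bool) : ℝ → TV :=
  fun t => if m t then s t else TV.U

def tvNot : TV → TV
  | TV.T => TV.F | TV.F => TV.T | TV.U => TV.U

def tvOr : TV → TV → TV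
  | TV.T, _ => TV.T
  | _, TV.T => TV.T
  | TV.F, TV.F => TV.F
  | _, _ => TV.U

def tvAnd : TV → TV → TV
  | TV.F, _ => TV.F
  | _, TV.F => TV.F
  | TV.T, TV.T => TV.T
  | _, _ => TV.U

open Classical in
noncomputable def evOp (a b : ℝ) (s : ℝ → TV) : ℝ → TV :=
  fun t =>
    if ∃ t' ∈ Set.Icc (t + a) (t + b), s t' = TV.T then TV.T
    else if ∀ t' ∈ Set.Icc (t + a) (t + b), s t' = TV.F then TV.F
    else TV.U

open Classical in
noncomputable def glOp (a b : ℝ) (s : ℝ → TV) : ℝ → TV :=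
  fun t =>
    if ∃ t' ∈ Set.Icc (t + a) (t + b), s t' = TV.F then TV.F
    else if ∀ t' ∈ Set.Icc (t + a) (t + b), s t' = TV.T then TV.T
    else TV.U

open Classical in
noncomputable def pastMask (a b : ℝ) (m : ℝ → Bool) : ℝ → Bool :=
  fun t => decide (∃ t'' ∈ Set.Icc (t - b) (t - a) ∩ Set.Ici (0:ℝ), m t'' = true)

def orMask (s : ℝ → TV) : ℝ → Bool := fun t => !(s t == TV.T)

def andMask (s : ℝ → TV) : ℝ → Bool := fun t => !(s t == TV.F)

def Hset (a b : ℝ) (S : Set ℝ) : Set ℝ := {t | Set.Icc (t - b) (t - a) ⊆ S}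

def Pset (a b : ℝ) (S : Set ℝ) : Set ℝ := {t | ∃ t' ∈ Set.Icc (t - b) (t - a), t' ∈ S}
theorem pastMask_optimal_eventually (a b : ℝ) (ha : 0 ≤ a) (hab : a ≤ b)
    (m m' : ℝ → Bool) (t₀ : ℝ) (h₀ : m' t₀ = false) (hP : pastMask a b m t₀ = true) :
    ∃ (s : ℝ → TV) (t : ℝ), m t = true ∧
      evOp a b (maskApply s m') t ≠ evOp a b s t := by

  classical
  have hP' := of_decide_eq_true hP
  obtain ⟨t'', ⟨⟨h1, h2⟩, _⟩, hm⟩ := hP'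
  classical
  refine ⟨fun t' => if t' = t₀ then TV.T else TV.U, t'', hm, ?_⟩
  have ht₀ : t₀ ∈ Set.Icc (t'' + a) (t'' + b) := ⟨by linarith, by linarith⟩
  have hev : evOp a b (fun t' => if t' = t₀ then TV.T else TV.U) t'' = TV.T := by
    unfold evOp
    rw [if_pos ⟨t₀, ht₀, by simp⟩]
  have hmasked : ∀ t', maskApply (fun t' => if t' = t₀ then TV.T else TV.U) m' t' ≠ TV.T := by
    intro t'
    unfold maskApply
    by_cases h : m' t' = true
    · simp only [h, if_true]
      by_cases h2 : t' = t₀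
      · subst h2; rw [h₀] at h; simp at h
      · simp [h2]
    · simp [h]
  have hev2 : evOp a b (maskApply (fun t' => if t' = t₀ then TV.T else TV.U) m') t'' ≠ TV.T := by
    unfold evOp
    rw [if_neg]
    · split <;> simp
    · rintro ⟨x, _, hx⟩; exact hmasked x hx
  rw [hev]; exact hev2
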